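/- Let D be a real number with 0.58 ≤ D ≤ 0.7, and set T₃ = Φ₃(0.58, D). Then D < T₃ < log 7, so that in particular Θ(D/2, (log 7)/2) and Θ(T₃/2, (log 7)/2) are defined, and cos( Θ(D/2, (log 7)/2) − Θ(T₃/2, (log 7)/2) ) < (cosh D · cosh T₃ − cosh(2D))/(sinh D · sinh T₃). -/

import Mathlib

open Real

/-- The inverse hyperbolic cosine. -/
noncomputable def arcosh (x : ℝ) : ℝ := Real.log (x + Real.sqrt (x ^ 2 - 1))

/-- The function `Φ_n`, defined for `0 < δ ≤ D`. -/
noncomputable def Phi (n : ℕ) (δ D : ℝ) : ℝ :=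
  _root_.arcosh (Real.cosh (n * δ) +
    (Real.cosh (n * δ) - 1) * (Real.cosh D - Real.cosh δ) / (Real.cosh δ + 1))

/-- The function `Θ(w, R) = arccos(tanh w / tanh R)`, defined for `0 < w < R`. -/
noncomputable def Theta (w R : ℝ) : ℝ := Real.arccos (Real.tanh w / Real.tanh R)

lemma cosh_arcosh {x : ℝ} (hx : 1 ≤ x) : Real.cosh (_root_.arcosh x) = x := by
  have h0 : (0:ℝ) ≤ x ^ 2 - 1 := by nlinarith
  have hs : Real.sqrt (x ^ 2 - 1) ^ 2 = x ^ 2 - 1 := Real.sq_sqrt h0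
  have hsn : 0 ≤ Real.sqrt (x ^ 2 - 1) := Real.sqrt_nonneg _
  have hy : 0 < x + Real.sqrt (x ^ 2 - 1) := by nlinarith
  rw [_root_.arcosh, Real.cosh_eq, Real.exp_neg, Real.exp_log hy]
  field_simp
  nlinarith [hs]

lemma sinh_arcosh {x : ℝ} (hx : 1 ≤ x) :
    Real.sinh (_root_.arcosh x) = Real.sqrt (x ^ 2 - 1) := by
  have h0 : (0:ℝ) ≤ x ^ 2 - 1 := by nlinarith
  have hs : Real.sqrt (x ^ 2 - 1) ^ 2 = x ^ 2 - 1 := Real.sq_sqrt h0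
  have hsn : 0 ≤ Real.sqrt (x ^ 2 - 1) := Real.sqrt_nonneg _
  have hy : 0 < x + Real.sqrt (x ^ 2 - 1) := by nlinarith
  rw [_root_.arcosh, Real.sinh_eq, Real.exp_neg, Real.exp_log hy]
  field_simp
  nlinarith [hs]

lemma arcosh_nonneg {x : ℝ} (hx : 1 ≤ x) : 0 ≤ _root_.arcosh x := by
  have hsn : 0 ≤ Real.sqrt (x ^ 2 - 1) := Real.sqrt_nonneg _
  exact Real.log_nonneg (by linarith)

lemma tanh_half (x : ℝ) : Real.tanh (x / 2) = Real.sinh x / (Real.cosh x + 1) := by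
  have e : 2 * (x / 2) = x := by ring
  have h1 := Real.sinh_two_mul (x / 2)
  have h2 := Real.cosh_two_mul (x / 2)
  have h3 := Real.sinh_sq (x / 2)
  rw [e] at h1 h2
  have hc : 0 < Real.cosh (x / 2) := Real.cosh_pos _
  rw [Real.tanh_eq_sinh_div_cosh, h1, h2, h3]
  have hne : Real.cosh (x / 2) ^ 2 + (Real.cosh (x / 2) ^ 2 - 1) + 1 ≠ 0 := by nlinarith
  field_simp
  ring

lemma tanh_log7_half : Real.tanh (Real.log 7 / 2) = 3 / 4 := by
  set u := Real.exp (Real.log 7 / 2) with hu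
  have hupos : 0 < u := Real.exp_pos _
  have hu2 : u ^ 2 = 7 := by
    rw [hu, sq, ← Real.exp_add, show Real.log 7 / 2 + Real.log 7 / 2 = Real.log 7 by ring,
      Real.exp_log (by norm_num)]
  have hune : u ≠ 0 := ne_of_gt hupos
  rw [Real.tanh_eq_sinh_div_cosh, Real.sinh_eq, Real.cosh_eq, Real.exp_neg, ← hu]
  have hden : (0:ℝ) < (u + u⁻¹) / 2 := by positivity
  rw [div_eq_div_iff (ne_of_gt hden) (by norm_num)]
  field_simp
  linear_combination hu2


lemma aux_one_sub_sq {t : ℝ} (h0 : 0 ≤ t) (h1 : t ≤ 1) : 0 ≤ 1 - t ^ 2 := by nlinarith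

lemma aux_lt_of_sq {b q : ℝ} (hb : 0 ≤ b) (hq : 0 < q) (h : b ^ 2 < q ^ 2) : b < q := by
  nlinarith

lemma aux_4S {x S : ℝ} (hx1 : 1 ≤ x) (hx2 : x ≤ 3.3) (hS : S ^ 2 = x ^ 2 - 1)
    (hS0 : 0 ≤ S) : 4 * S ≤ 3 * (x + 1) := by
  by_contra h
  push_neg at h
  nlinarith [hS, mul_pos (lt_of_le_of_lt (by nlinarith : (0:ℝ) ≤ 3 * (x + 1)) h)
    (lt_of_le_of_lt (by nlinarith : (0:ℝ) ≤ 3 * (x + 1)) h)]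

lemma aux_g_lo {a : ℝ} (ha1 : (1.17296:ℝ) ≤ a) (ha2 : a ≤ 1.17298) :
    (2.93631:ℝ) ≤ 4 * a ^ 3 - 3 * a := by
  nlinarith [sub_nonneg.2 ha1, sq_nonneg (a - 1.17296),
    mul_nonneg (sub_nonneg.2 ha1) (sq_nonneg (a - 1.17296))]

lemma aux_g_hi {a : ℝ} (ha1 : (1.17296:ℝ) ≤ a) (ha2 : a ≤ 1.17298) :
    4 * a ^ 3 - 3 * a ≤ (2.93659:ℝ) := by
  nlinarith [sub_nonneg.2 ha2, sq_nonneg (1.17298 - a),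
    mul_nonneg (sub_nonneg.2 ha2) (sq_nonneg (1.17298 - a))]

lemma aux_Y_lo {a c G Y : ℝ} (ha1 : (1.17296:ℝ) ≤ a) (ha2 : a ≤ 1.17298) (hac : a ≤ c)
    (hg1 : (2.93631:ℝ) ≤ G) (hYe : Y * (a + 1) = G * (a + 1) + (G - 1) * (c - a)) :
    2.9362 + 0.891 * (c - 1.17296) ≤ Y := by
  have hap1 : (0:ℝ) < a + 1 := by linarith
  by_contra hcon
  push_neg at hcon
  nlinarith [hYe, mul_pos (sub_pos.2 hcon) hap1,
    mul_nonneg (sub_nonneg.2 hac) (sub_nonneg.2 hg1),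
    mul_nonneg (sub_nonneg.2 hac) (sub_nonneg.2 ha2),
    mul_nonneg (sub_nonneg.2 ha2) hap1.le,
    mul_nonneg (sub_nonneg.2 hg1) hap1.le]

lemma aux_Y_hi {a c G Y : ℝ} (ha1 : (1.17296:ℝ) ≤ a) (ha2 : a ≤ 1.17298) (hac : a ≤ c)
    (hg2 : G ≤ (2.93659:ℝ)) (hYe : Y * (a + 1) = G * (a + 1) + (G - 1) * (c - a)) :
    Y ≤ 2.9367 + 0.8913 * (c - 1.17296) := by
  have hap1 : (0:ℝ) < a + 1 := by linarith
  by_contra hcon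
  push_neg at hcon
  nlinarith [hYe, mul_pos (sub_pos.2 hcon) hap1,
    mul_nonneg (sub_nonneg.2 hac) (sub_nonneg.2 hg2),
    mul_nonneg (sub_nonneg.2 hac) (sub_nonneg.2 ha1),
    mul_nonneg (sub_nonneg.2 ha1) hap1.le,
    mul_nonneg (sub_nonneg.2 hg2) hap1.le]

lemma aux_Qpos {c Y : ℝ} (hc1 : (1.17296:ℝ) ≤ c) (hc2 : c ≤ 1.25517)
    (hY1 : 2.9362 + 0.891 * (c - 1.17296) ≤ Y) (hY2 : Y ≤ 2.9367 + 0.8913 * (c - 1.17296)) :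
    0 < 9 * (c * Y - 2 * c * c + 1) - 16 * (c - 1) * (Y - 1) := by
  nlinarith [mul_nonneg (sub_nonneg.2 hc1) (sub_nonneg.2 hc2),
    mul_nonneg (sub_nonneg.2 hY1) (sub_nonneg.2 hY2)]

lemma aux_key {c Y : ℝ} (hc1 : (1.17296:ℝ) ≤ c) (hc2 : c ≤ 1.25517)
    (hY1 : 2.9362 + 0.891 * (c - 1.17296) ≤ Y) (hY2 : Y ≤ 2.9367 + 0.8913 * (c - 1.17296)) :
    (c - 1) * (Y - 1) * (25 - 7 * c) * (25 - 7 * Y) <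
      (9 * (c * Y - 2 * c * c + 1) - 16 * (c - 1) * (Y - 1)) ^ 2 := by
  nlinarith [mul_nonneg (sub_nonneg.2 hc1) (sub_nonneg.2 hc2), sq_nonneg (c - 1.2),
    sq_nonneg (Y - 2.97), mul_nonneg (sub_nonneg.2 hY1) (sub_nonneg.2 hY2),
    mul_nonneg (sub_nonneg.2 hc1) (sub_nonneg.2 hY1)]


set_option maxHeartbeats 1000000 in
/-- For `0.58 ≤ D ≤ 0.7` and `T₃ = Φ₃(0.58, D)` one has `D < T₃ < log 7` and
`cos(Θ(D/2, (log 7)/2) − Θ(T₃/2, (log 7)/2)) < (cosh D cosh T₃ − cosh 2D)/(sinh D sinh T₃)`. -/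
theorem stmt10 (D : ℝ) (h1 : (0.58 : ℝ) ≤ D) (h2 : D ≤ (0.7 : ℝ)) :
    D < Phi 3 0.58 D ∧ Phi 3 0.58 D < Real.log 7 ∧
    Real.cos (Theta (D / 2) (Real.log 7 / 2) - Theta (Phi 3 0.58 D / 2) (Real.log 7 / 2)) <
      (Real.cosh D * Real.cosh (Phi 3 0.58 D) - Real.cosh (2 * D)) /
        (Real.sinh D * Real.sinh (Phi 3 0.58 D)) := by
  -- numeric bounds on exp
  have he58lo := Real.sum_le_exp_of_nonneg (x := 0.58) (by norm_num) 8
  have he58hi := Real.exp_bound' (x := 0.58) (by norm_num) (by norm_num) (n := 8) (by norm_num)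
  have he7lo := Real.sum_le_exp_of_nonneg (x := 0.7) (by norm_num) 8
  have he7hi := Real.exp_bound' (x := 0.7) (by norm_num) (by norm_num) (n := 8) (by norm_num)
  norm_num [Finset.sum_range_succ, Nat.factorial] at he58lo he58hi he7lo he7hi
  rw [show ((29:ℝ)/50) = 0.58 by norm_num] at he58lo he58hi
  rw [show ((7:ℝ)/10) = 0.7 by norm_num] at he7lo he7hi
  have e58lo : (1.786037 : ℝ) ≤ Real.exp 0.58 := by linarith
  have e58hi : Real.exp 0.58 ≤ (1.786039 : ℝ) := by linarith
  have e7lo : (2.013749 : ℝ) ≤ Real.exp 0.7 := by linarith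
  have e7hi : Real.exp 0.7 ≤ (2.013753 : ℝ) := by linarith
  clear he58lo he58hi he7lo he7hi
  set a := Real.cosh 0.58 with ha
  have ha_eq : a = (Real.exp 0.58 + (Real.exp 0.58)⁻¹) / 2 := by
    rw [ha, Real.cosh_eq, Real.exp_neg]
  have hexp58pos : (0:ℝ) < Real.exp 0.58 := Real.exp_pos _
  have ha1 : (1.17296 : ℝ) ≤ a := by
    rw [ha_eq]
    have h : (1.786039 : ℝ)⁻¹ ≤ (Real.exp 0.58)⁻¹ := by
      apply inv_anti₀ (by positivity) e58hi
    rw [show ((1.786039:ℝ)⁻¹ = 1000000/1786039) by norm_num] at h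
    linarith
  have ha2 : a ≤ (1.17298 : ℝ) := by
    rw [ha_eq]
    have h : (Real.exp 0.58)⁻¹ ≤ (1.786037 : ℝ)⁻¹ := by
      apply inv_anti₀ (by positivity) e58lo
    rw [show ((1.786037:ℝ)⁻¹ = 1000000/1786037) by norm_num] at h
    linarith
  have hc7 : Real.cosh 0.7 ≤ (1.25517 : ℝ) := by
    rw [Real.cosh_eq, Real.exp_neg]
    have h : (Real.exp 0.7)⁻¹ ≤ (2.013749 : ℝ)⁻¹ := by
      apply inv_anti₀ (by positivity) e7lo
    rw [show ((2.013749:ℝ)⁻¹ = 1000000/2013749) by norm_num] at h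
    linarith
  set c := Real.cosh D with hc
  have hac : a ≤ c := by
    rw [ha, hc, Real.cosh_le_cosh, abs_of_pos (by norm_num), abs_of_pos (by linarith)]
    exact h1
  have hc2 : c ≤ (1.25517 : ℝ) := by
    refine le_trans ?_ hc7
    rw [hc, Real.cosh_le_cosh, abs_of_pos (by linarith), abs_of_pos (by norm_num)]
    exact h2
  have hc1 : (1.17296 : ℝ) ≤ c := le_trans ha1 hac
  -- the argument of arcosh
  set Y := Real.cosh (((3:ℕ):ℝ) * (0.58:ℝ)) +
      (Real.cosh (((3:ℕ):ℝ) * (0.58:ℝ)) - 1) * (Real.cosh D - Real.cosh 0.58) /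
        (Real.cosh 0.58 + 1) with hYdef
  have hPhi : Phi 3 0.58 D = _root_.arcosh Y := rfl
  have hcosh3 : Real.cosh (((3:ℕ):ℝ) * (0.58:ℝ)) = 4 * a ^ 3 - 3 * a := by
    rw [show ((3:ℕ):ℝ) * (0.58:ℝ) = 3 * 0.58 by norm_num, Real.cosh_three_mul, ha]
  have hap1 : (0:ℝ) < a + 1 := by linarith
  have hYe : Y * (a + 1) = (4 * a ^ 3 - 3 * a) * (a + 1) + (4 * a ^ 3 - 3 * a - 1) * (c - a) := by
    rw [hYdef, hcosh3, ← ha, ← hc]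
    field_simp
  have hg1 := aux_g_lo ha1 ha2
  have hg2 := aux_g_hi ha1 ha2
  obtain ⟨G, hG⟩ : ∃ G : ℝ, G = 4 * a ^ 3 - 3 * a := ⟨_, rfl⟩
  rw [← hG] at hYe hg1 hg2
  clear hG
  clear_value a c Y
  have hY1 : 2.9362 + 0.891 * (c - 1.17296) ≤ Y := aux_Y_lo ha1 ha2 hac hg1 hYe
  have hY2 : Y ≤ 2.9367 + 0.8913 * (c - 1.17296) := aux_Y_hi ha1 ha2 hac hg2 hYe
  have hYlo : (2.9362:ℝ) ≤ Y := by linarith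
  have hYhi : Y ≤ (3.01:ℝ) := by linarith
  have hYone : (1:ℝ) ≤ Y := by linarith
  set T := Phi 3 0.58 D with hT
  have hcoshT : Real.cosh T = Y := by rw [hPhi]; exact _root_.cosh_arcosh hYone
  have hTnn : 0 ≤ T := by rw [hPhi]; exact _root_.arcosh_nonneg hYone
  -- D < T
  have hDT : D < T := by
    have habs : |D| < |T| := by
      rw [← Real.cosh_lt_cosh, hcoshT, ← hc]
      linarith
    calc D ≤ |D| := le_abs_self D
    _ < |T| := habs
    _ = T := abs_of_nonneg hTnn
  -- T < log 7
  have hlog7 : (0:ℝ) < Real.log 7 := Real.log_pos (by norm_num)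
  have hcosh7 : Real.cosh (Real.log 7) = 25 / 7 := by
    rw [Real.cosh_eq, Real.exp_neg, Real.exp_log (by norm_num)]
    norm_num
  have hT7 : T < Real.log 7 := by
    have habs : |T| < |Real.log 7| := by
      rw [← Real.cosh_lt_cosh, hcoshT, hcosh7]
      linarith
    calc T = |T| := (abs_of_nonneg hTnn).symm
    _ < |Real.log 7| := habs
    _ = Real.log 7 := abs_of_nonneg hlog7.le
  refine ⟨hDT, hT7, ?_⟩
  -- main inequality
  have hDpos : (0:ℝ) < D := by linarith
  set S1 := Real.sinh D with hS1
  set S2 := Real.sinh T with hS2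
  have hS1sq : S1 ^ 2 = c ^ 2 - 1 := by rw [hS1, hc, Real.sinh_sq]
  have hS2sq : S2 ^ 2 = Y ^ 2 - 1 := by rw [hS2, Real.sinh_sq, hcoshT]
  have hS1pos : (0:ℝ) < S1 := by rw [hS1]; exact Real.sinh_pos_iff.2 hDpos
  have hS2pos : (0:ℝ) < S2 := by rw [hS2]; exact Real.sinh_pos_iff.2 (lt_trans hDpos hDT)
  clear_value T S1 S2
  have hcp1 : (0:ℝ) < c + 1 := by linarith
  have hYp1 : (0:ℝ) < Y + 1 := by linarith
  set t1 : ℝ := 4 * S1 / (3 * (c + 1)) with ht1def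
  set t2 : ℝ := 4 * S2 / (3 * (Y + 1)) with ht2def
  clear_value t1 t2
  have hTh1 : Theta (D / 2) (Real.log 7 / 2) = Real.arccos t1 := by
    rw [Theta, tanh_log7_half, tanh_half, ← hc, ← hS1, ht1def]
    congr 1
    field_simp
  have hTh2 : Theta (T / 2) (Real.log 7 / 2) = Real.arccos t2 := by
    rw [Theta, tanh_log7_half, tanh_half, hcoshT, ← hS2, ht2def]
    congr 1
    field_simp
  have ht1nn : 0 ≤ t1 := by
    rw [ht1def]
    positivity
  have ht2nn : 0 ≤ t2 := by
    rw [ht2def]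
    positivity
  have ht1le : t1 ≤ 1 := by
    rw [ht1def, div_le_one (by positivity)]
    exact aux_4S (by linarith) (by linarith) hS1sq hS1pos.le
  have ht2le : t2 ≤ 1 := by
    rw [ht2def, div_le_one (by positivity)]
    exact aux_4S (by linarith) (by linarith) hS2sq hS2pos.le
  have h1t1 : 0 ≤ 1 - t1 ^ 2 := aux_one_sub_sq ht1nn ht1le
  have h1t2 : 0 ≤ 1 - t2 ^ 2 := aux_one_sub_sq ht2nn ht2le
  have hcosh2D : Real.cosh (2 * D) = 2 * c ^ 2 - 1 := by
    rw [Real.cosh_two_mul, ← hc, ← hS1]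
    linarith [hS1sq]
  rw [hTh1, hTh2, Real.cos_sub, Real.cos_arccos (by linarith) ht1le,
    Real.cos_arccos (by linarith) ht2le, Real.sin_arccos, Real.sin_arccos,
    hcoshT, hcosh2D, lt_div_iff₀ (by positivity)]
  -- now a purely algebraic goal
  set B := Real.sqrt (1 - t1 ^ 2) * Real.sqrt (1 - t2 ^ 2) with hB
  have hBnn : 0 ≤ B := by rw [hB]; positivity
  have hBsq : B ^ 2 = (1 - t1 ^ 2) * (1 - t2 ^ 2) := by
    rw [hB, mul_pow, Real.sq_sqrt h1t1, Real.sq_sqrt h1t2]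
  clear_value B
  have hE1 : t1 * t2 * (S1 * S2) = 16 / 9 * ((c - 1) * (Y - 1)) := by
    rw [ht1def, ht2def, div_mul_div_comm, div_mul_eq_mul_div, div_eq_iff (by positivity)]
    linear_combination (16 * S2 ^ 2) * hS1sq + (16 * (c ^ 2 - 1)) * hS2sq
  have h1t1e : 1 - t1 ^ 2 = (25 - 7 * c) / (9 * (c + 1)) := by
    rw [ht1def, div_pow, eq_div_iff (by positivity)]
    field_simp
    linear_combination (-144 : ℝ) * hS1sq
  have h1t2e : 1 - t2 ^ 2 = (25 - 7 * Y) / (9 * (Y + 1)) := by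
    rw [ht2def, div_pow, eq_div_iff (by positivity)]
    field_simp
    linear_combination (-144 : ℝ) * hS2sq
  have hSSsq : (S1 * S2) ^ 2 = (c ^ 2 - 1) * (Y ^ 2 - 1) := by
    rw [mul_pow, hS1sq, hS2sq]
  have hBSsq : (B * (S1 * S2)) ^ 2 =
      (c - 1) * (Y - 1) * (25 - 7 * c) * (25 - 7 * Y) / 81 := by
    rw [mul_pow, hBsq, h1t1e, h1t2e, hSSsq]
    field_simp
    ring
  have hQpos := aux_Qpos hc1 hc2 hY1 hY2
  have hkey := aux_key hc1 hc2 hY1 hY2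
  have hBS : B * (S1 * S2) <
      (9 * (c * Y - 2 * c * c + 1) - 16 * (c - 1) * (Y - 1)) / 9 := by
    refine aux_lt_of_sq (by positivity) (by linarith) ?_
    rw [hBSsq]
    rw [div_pow]
    norm_num
    linarith
  have hexpand : (t1 * t2 + B) * (S1 * S2) = t1 * t2 * (S1 * S2) + B * (S1 * S2) := by ring
  rw [hexpand]
  linarith [hE1, hBS]
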